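/- Let Ĥ be a group with a central subgroup Z and abelian quotient V = Ĥ/Z, and suppose Ĥ = W₁·W₂·Z where W₁, W₂ are abelian subgroups with W₁ ∩ Z = W₂ ∩ Z = {1} and every element of Ĥ has a unique expression w₁w₂z with wᵢ ∈ Wᵢ, z ∈ Z. Assume Z is uniquely 2-divisible and [Ĥ,Ĥ] ⊆ Z. Let κ: V × V → Z be the pairing induced by the commutator. Then the map j: Ĥ → V × Z, j(w₁w₂z) = (π(w₁w₂), z + ½κ(w₁,w₂)) (π: Ĥ → V the projection, V and Z written additively), is a group isomorphism onto the Heisenberg group V^♯ associated to (V, κ). -/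

import Mathlib

/-- The commutator `[x,y] = x y x⁻¹ y⁻¹`. -/
def grpComm {H : Type*} [Group H] (x y : H) : H := x * y * x⁻¹ * y⁻¹

section AuxHeis

variable {H : Type*} [Group H] {Z : Subgroup H}

theorem auxHeis_central (hZ : Z ≤ Subgroup.center H) (hcomm : ∀ x y : H, grpComm x y ∈ Z)
    (x y g : H) : g * grpComm x y = grpComm x y * g :=
  Subgroup.mem_center_iff.mp (hZ (hcomm x y)) g

theorem auxHeis_zc (hZ : Z ≤ Subgroup.center H) (z : Z) (g : H) :
    g * (z : H) = (z : H) * g :=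
  Subgroup.mem_center_iff.mp (hZ z.2) g

theorem auxHeis_comm_eq_one {a b : H} (h : a * b = b * a) : grpComm a b = 1 := by
  simp only [grpComm, h]; group

theorem auxHeis_skew (a b : H) : grpComm a b = (grpComm b a)⁻¹ := by
  simp only [grpComm]; group

theorem auxHeis_bl (hZ : Z ≤ Subgroup.center H) (hcomm : ∀ x y : H, grpComm x y ∈ Z)
    (a b c : H) : grpComm (a * b) c = grpComm a c * grpComm b c := by
  calc grpComm (a * b) c = a * grpComm b c * (c * a⁻¹ * c⁻¹) := by
        simp only [grpComm]; group
    _ = grpComm b c * a * (c * a⁻¹ * c⁻¹) := by rw [auxHeis_central hZ hcomm b c a]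
    _ = grpComm b c * grpComm a c := by simp only [grpComm]; group
    _ = grpComm a c * grpComm b c := auxHeis_central hZ hcomm a c _

theorem auxHeis_br (hZ : Z ≤ Subgroup.center H) (hcomm : ∀ x y : H, grpComm x y ∈ Z)
    (a b c : H) : grpComm a (b * c) = grpComm a b * grpComm a c := by
  calc grpComm a (b * c) = grpComm a b * (b * grpComm a c * b⁻¹) := by
        simp only [grpComm]; group
    _ = grpComm a b * (grpComm a c * b * b⁻¹) := by rw [auxHeis_central hZ hcomm a c b]
    _ = grpComm a b * grpComm a c := by group

/-- `Z`-valued commutator pairing. -/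
def KmapHeis (Z : Subgroup H) (hcomm : ∀ x y : H, grpComm x y ∈ Z) (x y : H) : Z :=
  ⟨grpComm x y, hcomm x y⟩

@[simp] theorem KmapHeis_coe (Z : Subgroup H) (hcomm : ∀ x y : H, grpComm x y ∈ Z) (x y : H) :
    (KmapHeis Z hcomm x y : H) = grpComm x y := rfl

end AuxHeis

theorem heisenberg_splitting
    (H : Type*) [Group H] (Z W₁ W₂ : Subgroup H)
    (hZ : Z ≤ Subgroup.center H)
    (hW₁comm : ∀ a ∈ W₁, ∀ b ∈ W₁, a * b = b * a)
    (hW₂comm : ∀ a ∈ W₂, ∀ b ∈ W₂, a * b = b * a)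
    (hW₁Z : W₁ ⊓ Z = ⊥) (hW₂Z : W₂ ⊓ Z = ⊥)
    (hfact : ∀ g : H, ∃! w : W₁ × W₂ × Z, g = (w.1 : H) * (w.2.1 : H) * (w.2.2 : H))
    (hcomm : ∀ x y : H, grpComm x y ∈ Z)
    (half : Z → Z) (hhalf : ∀ z : Z, half z * half z = z)
    (hinj2 : ∀ z w : Z, z * z = w * w → z = w) :
    ∃ σ : H → Z,
      (∀ (w₁ : W₁) (w₂ : W₂) (z : Z),
        σ ((w₁ : H) * (w₂ : H) * (z : H)) =
          z * half ⟨grpComm (w₁ : H) (w₂ : H), hcomm _ _⟩) ∧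
      Function.Bijective (fun g : H => ((QuotientGroup.mk g : H ⧸ Z), σ g)) ∧
      (∀ g g' : H, σ (g * g') = σ g * σ g' * half ⟨grpComm g g', hcomm g g'⟩) := by
  classical
  set K : H → H → Z := KmapHeis Z hcomm with hK
  have hzc : ∀ (z : Z) (g : H), g * (z : H) = (z : H) * g := auxHeis_zc hZ
  have hcen : ∀ x y g : H, g * grpComm x y = grpComm x y * g := auxHeis_central hZ hcomm
  have hZcomm : ∀ a b : Z, a * b = b * a := by
    intro a b
    apply Subtype.ext
    push_cast
    exact hzc b a
  letI : CommGroup Z := { (inferInstance : Group Z) with mul_comm := hZcomm }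
  -- half is a homomorphism
  have hhalf_mul : ∀ a b : Z, half (a * b) = half a * half b := by
    intro a b
    apply hinj2
    rw [hhalf]
    calc a * b = half a * half a * (half b * half b) := by rw [hhalf, hhalf]
      _ = half a * (half a * half b) * half b := by simp only [mul_assoc]
      _ = half a * (half b * half a) * half b := by rw [hZcomm (half a) (half b)]
      _ = half a * half b * (half a * half b) := by simp only [mul_assoc]
  -- K lemmas
  have K_bl : ∀ a b c : H, K (a * b) c = K a c * K b c := fun a b c =>
    Subtype.ext (auxHeis_bl hZ hcomm a b c)
  have K_br : ∀ a b c : H, K a (b * c) = K a b * K a c := fun a b c =>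
    Subtype.ext (auxHeis_br hZ hcomm a b c)
  have K_skew : ∀ a b : H, K a b = (K b a)⁻¹ := fun a b =>
    Subtype.ext (auxHeis_skew a b)
  have K_zr : ∀ (x : H) (z : Z), K x (z : H) = 1 := fun x z =>
    Subtype.ext (auxHeis_comm_eq_one (hzc z x))
  have K_zl : ∀ (z : Z) (x : H), K (z : H) x = 1 := fun z x =>
    Subtype.ext (auxHeis_comm_eq_one (hzc z x).symm)
  have K_W₁ : ∀ a b : W₁, K (a : H) (b : H) = 1 := fun a b =>
    Subtype.ext (auxHeis_comm_eq_one (hW₁comm a a.2 b b.2))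
  have K_W₂ : ∀ a b : W₂, K (a : H) (b : H) = 1 := fun a b =>
    Subtype.ext (auxHeis_comm_eq_one (hW₂comm a a.2 b b.2))
  -- the factorization function
  have hfact' := hfact
  choose F hFspec hFuniq using hfact'
  have hFeq : ∀ (w₁ : W₁) (w₂ : W₂) (z : Z),
      F ((w₁ : H) * (w₂ : H) * (z : H)) = (w₁, w₂, z) := fun w₁ w₂ z =>
    (hFuniq _ (w₁, w₂, z) rfl).symm
  set σ : H → Z := fun g => (F g).2.2 * half (K ((F g).1 : H) ((F g).2.1 : H)) with hσdef
  have hσ : ∀ (w₁ : W₁) (w₂ : W₂) (z : Z),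
      σ ((w₁ : H) * (w₂ : H) * (z : H)) = z * half (K (w₁ : H) (w₂ : H)) := by
    intro w₁ w₂ z
    rw [hσdef]
    simp only [hFeq]
  -- the product factorization formula
  have hmulfact : ∀ (w₁ w₁' : W₁) (w₂ w₂' : W₂) (z z' : Z),
      ((w₁ : H) * (w₂ : H) * (z : H)) * ((w₁' : H) * (w₂' : H) * (z' : H)) =
        ((w₁ * w₁' : W₁) : H) * ((w₂ * w₂' : W₂) : H)
          * ((z * z' * K (w₂ : H) (w₁' : H) : Z) : H) := by
    intro w₁ w₁' w₂ w₂' z z'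
    push_cast
    rw [hK]
    simp only [KmapHeis_coe]
    set a : H := (w₁ : H); set b : H := (w₂ : H)
    set a' : H := (w₁' : H); set b' : H := (w₂' : H)
    set c : H := grpComm b a' with hc
    have t1 : (z : H) * (a' * (b' * (z' : H))) = a' * ((z : H) * (b' * (z' : H))) := by
      rw [← mul_assoc, ← hzc z a', mul_assoc]
    have t2 : (z : H) * (b' * (z' : H)) = b' * ((z : H) * (z' : H)) := by
      rw [← mul_assoc, ← hzc z b', mul_assoc]
    have hba : b * a' = c * (a' * b) := by rw [hc]; simp only [grpComm]; group
    have t3 : ∀ X : H, b * (a' * X) = c * (a' * (b * X)) := by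
      intro X
      rw [← mul_assoc, hba]
      simp only [mul_assoc]
    have t4 : ∀ g X : H, c * (g * X) = g * (c * X) := by
      intro g X
      rw [← mul_assoc, hc, ← hcen b a' g, mul_assoc]
    have t5 : ∀ g : H, c * g = g * c := fun g => (hcen b a' g).symm
    calc a * b * (z : H) * (a' * b' * (z' : H))
        = a * (b * ((z:H) * (a' * (b' * (z':H))))) := by simp only [mul_assoc]
      _ = a * (b * (a' * (b' * ((z:H) * (z':H))))) := by rw [t1, t2]
      _ = a * (c * (a' * (b * (b' * ((z:H) * (z':H)))))) := by rw [t3]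
      _ = a * (a' * (b * (b' * ((z:H) * ((z':H) * c))))) := by rw [t4, t4, t4, t4, t5]
      _ = a * a' * (b * b') * ((z:H) * (z':H) * c) := by simp only [mul_assoc]
  refine ⟨σ, ?_, ?_, ?_⟩
  · intro w₁ w₂ z
    exact hσ w₁ w₂ z
  · constructor
    · -- injective
      intro g g' h
      obtain ⟨⟨w₁, w₂, z⟩, rfl, -⟩ := hfact g
      obtain ⟨⟨w₁', w₂', z'⟩, rfl, -⟩ := hfact g'
      have h1 : (QuotientGroup.mk ((w₁:H) * w₂ * z) : H ⧸ Z)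
          = QuotientGroup.mk ((w₁':H) * w₂' * z') := congrArg Prod.fst h
      have hζ : ((w₁:H) * w₂ * z)⁻¹ * ((w₁':H) * w₂' * z') ∈ Z := QuotientGroup.eq.mp h1
      set ζ : Z := ⟨_, hζ⟩ with hζdef
      have hg' : (w₁':H) * w₂' * z' = (w₁:H) * w₂ * ((z * ζ : Z) : H) := by
        push_cast [ζ]
        group
      have huniq : ((w₁, w₂, z * ζ) : W₁ × W₂ × Z) = (w₁', w₂', z') := by
        rw [hFuniq _ (w₁, w₂, z * ζ) hg', hFeq]
      obtain ⟨e1, e2, e3⟩ : w₁ = w₁' ∧ w₂ = w₂' ∧ z * ζ = z' := by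
        refine ⟨congrArg (·.1) huniq, congrArg (·.2.1) huniq, congrArg (·.2.2) huniq⟩
      have h2 : σ ((w₁:H) * w₂ * z) = σ ((w₁':H) * w₂' * z') := congrArg Prod.snd h
      rw [hσ, hσ, ← e1, ← e2] at h2
      have : z = z' := mul_right_cancel h2
      rw [← e1, ← e2, ← this]
    · -- surjective
      rintro ⟨v, t⟩
      obtain ⟨g, rfl⟩ := QuotientGroup.mk_surjective v
      obtain ⟨⟨w₁, w₂, z⟩, rfl, -⟩ := hfact g
      refine ⟨(w₁:H) * w₂ * ((t * (half (K (w₁:H) (w₂:H)))⁻¹ : Z) : H), ?_⟩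
      refine Prod.ext ?_ ?_
      · show (QuotientGroup.mk _ : H ⧸ Z) = _
        apply QuotientGroup.eq.mpr
        have : ((w₁:H) * w₂ * ((t * (half (K (w₁:H) (w₂:H)))⁻¹ : Z) : H))⁻¹
            * ((w₁:H) * w₂ * z)
            = ((t * (half (K (w₁:H) (w₂:H)))⁻¹)⁻¹ * z : Z) := by
          push_cast
          group
        rw [this]
        exact Subtype.prop _
      · show σ _ = t
        rw [hσ]
        simp [mul_assoc]
  · -- cocycle
    intro g g'
    obtain ⟨⟨w₁, w₂, z⟩, rfl, -⟩ := hfact g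
    obtain ⟨⟨w₁', w₂', z'⟩, rfl, -⟩ := hfact g'
    rw [hmulfact w₁ w₁' w₂ w₂' z z', hσ, hσ, hσ]
    have harg : (⟨grpComm ((w₁:H) * w₂ * z) ((w₁':H) * w₂' * z'), hcomm _ _⟩ : Z)
        = K ((w₁:H) * w₂ * z) ((w₁':H) * w₂' * z') := rfl
    rw [harg]
    have hKg : K ((w₁:H) * w₂ * z) ((w₁':H) * w₂' * z')
        = K (w₁:H) (w₂':H) * K (w₂:H) (w₁':H) := by
      simp only [K_bl, K_br, K_zr, K_zl, K_W₁, K_W₂, one_mul, mul_one]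
    have hKprod : K (((w₁ * w₁' : W₁)) : H) (((w₂ * w₂' : W₂)) : H)
        = K (w₁:H) (w₂:H) * K (w₁:H) (w₂':H) * ((K (w₂:H) (w₁':H))⁻¹ * K (w₁':H) (w₂':H)) := by
      push_cast
      simp only [K_bl, K_br]
      rw [K_skew (w₁':H) (w₂:H)]
    rw [hKg, hKprod]
    dsimp only
    have hch : (K (w₂:H) (w₁':H)) * half ((K (w₂:H) (w₁':H))⁻¹) = half (K (w₂:H) (w₁':H)) := by
      apply hinj2
      calc (K (w₂:H) (w₁':H)) * half ((K (w₂:H) (w₁':H))⁻¹)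
            * ((K (w₂:H) (w₁':H)) * half ((K (w₂:H) (w₁':H))⁻¹))
          = (K (w₂:H) (w₁':H)) * (K (w₂:H) (w₁':H))
              * (half ((K (w₂:H) (w₁':H))⁻¹) * half ((K (w₂:H) (w₁':H))⁻¹)) := by
            rw [mul_mul_mul_comm]
        _ = (K (w₂:H) (w₁':H)) * (K (w₂:H) (w₁':H)) * (K (w₂:H) (w₁':H))⁻¹ := by rw [hhalf]
        _ = K (w₂:H) (w₁':H) := by group
        _ = half (K (w₂:H) (w₁':H)) * half (K (w₂:H) (w₁':H)) := (hhalf _).symm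
    rw [hhalf_mul, hhalf_mul, hhalf_mul, hhalf_mul]
    rw [show half ((K (w₂:H) (w₁':H))⁻¹)
        = (K (w₂:H) (w₁':H))⁻¹ * half (K (w₂:H) (w₁':H)) from by rw [← hch]; group]
    generalize half (K (w₁:H) (w₂:H)) = A
    generalize half (K (w₁:H) (w₂':H)) = B
    generalize half (K (w₁':H) (w₂':H)) = D
    generalize half (K (w₂:H) (w₁':H)) = C
    generalize K (w₂:H) (w₁':H) = c
    simp only [mul_assoc]
    rw [mul_left_comm c A, mul_left_comm c B, mul_inv_cancel_left]
    ac_rfl
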